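/- Let k ≥ 1. The tropical hyperplane Y is contained in the amoeba of the pair-of-pants: Y ⊆ Log(H), where H = {y ∈ (ℂ*)^k : 1 + y₁ + ⋯ + y_k = 0}. That is, for every x ∈ ℝ^k such that max{0, x₁, …, x_k} is attained by at least two of the terms 0, x₁, …, x_k, there exists y ∈ (ℂ*)^k with 1 + y₁ + ⋯ + y_k = 0 and log|y_i| = x_i for all i. -/

import Mathlib

/-- The list of the `k+1` terms `0, x₁, …, x_k`. -/
def termsWithZero {k : ℕ} (x : Fin k → ℝ) : Fin (k + 1) → ℝ := Fin.cons 0 x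

/-- The tropical hyperplane `Y ⊆ ℝ^k`: the set of points where the maximum of the `k+1`
terms `0, x₁, …, x_k` is attained by at least two of them. -/
def tropicalHyperplane (k : ℕ) : Set (Fin k → ℝ) :=
  {x | ∃ i j : Fin (k + 1), i ≠ j ∧
    termsWithZero x i = termsWithZero x j ∧
    ∀ m, termsWithZero x m ≤ termsWithZero x i}

/-- Greedy partial sums: at each step add `±(r n)` so as to drive the sum towards `0`. -/
noncomputable def greedy (r : ℕ → ℝ) : ℕ → ℝ
  | 0 => 0
  | n + 1 => greedy r n + (if 0 ≤ greedy r n then -(r n) else r n)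

/-- The `n`-th greedy step. -/
noncomputable def greedyStep (r : ℕ → ℝ) (n : ℕ) : ℝ := if 0 ≤ greedy r n then -(r n) else r n

lemma greedy_succ (r : ℕ → ℝ) (n : ℕ) :
    greedy r (n + 1) = greedy r n + greedyStep r n := rfl

lemma abs_greedyStep (r : ℕ → ℝ) (n : ℕ) (h : 0 ≤ r n) : |greedyStep r n| = r n := by
  unfold greedyStep
  split <;> simp [abs_of_nonneg, h]

lemma sum_greedyStep (r : ℕ → ℝ) (N : ℕ) :
    ∑ n ∈ Finset.range N, greedyStep r n = greedy r N := by
  induction N with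
  | zero => rw [Finset.range_zero, Finset.sum_empty]; rfl
  | succ n ih => rw [Finset.sum_range_succ, ih, greedy_succ]

lemma abs_greedy_le (r : ℕ → ℝ) (R : ℝ) (h0 : ∀ n, 0 ≤ r n) (h1 : ∀ n, r n ≤ R) :
    ∀ n, |greedy r n| ≤ R := by
  have hR : 0 ≤ R := le_trans (h0 0) (h1 0)
  intro n
  induction n with
  | zero =>
    have : greedy r 0 = 0 := rfl
    rw [this, abs_zero]; exact hR
  | succ n ih =>
    rw [abs_le] at ih ⊢
    obtain ⟨hl, hr⟩ := ih
    rw [greedy_succ, greedyStep]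
    by_cases h : 0 ≤ greedy r n
    · rw [if_pos h]; constructor <;> nlinarith [h0 n, h1 n]
    · rw [if_neg h]; push_neg at h; constructor <;> nlinarith [h0 n, h1 n]

/-- For `k ≥ 1`, the tropical hyperplane is contained in the amoeba of
the pair-of-pants: for every `x ∈ Y` there is `y ∈ (ℂ*)^k` with `1 + y₁ + ⋯ + y_k = 0`
and `log|y_i| = x_i` for all `i`. -/
theorem tropicalHyperplane_subset_amoeba (k : ℕ) (hk : 1 ≤ k) :
    ∀ x ∈ tropicalHyperplane k,
      ∃ y : Fin k → ℂ, (∀ i, y i ≠ 0) ∧ 1 + ∑ i, y i = 0 ∧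
        ∀ i, Real.log ‖y i‖ = x i := by
  rintro x ⟨i, j, hij, heq, hmax⟩
  set t := termsWithZero x with ht
  set R := Real.exp (t i) with hR
  have hRpos : 0 < R := Real.exp_pos _
  set r : ℕ → ℝ := fun n =>
    if h : n < k + 1 then
      (if (⟨n, h⟩ : Fin (k + 1)) = i ∨ (⟨n, h⟩ : Fin (k + 1)) = j then 0
       else Real.exp (t ⟨n, h⟩))
    else 0 with hrdef
  have hr0 : ∀ n, 0 ≤ r n := by
    intro n
    simp only [hrdef]
    split
    · split
      · exact le_refl 0
      · exact (Real.exp_pos _).le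
    · exact le_refl 0
  have hr1 : ∀ n, r n ≤ R := by
    intro n
    simp only [hrdef]
    split
    · split
      · exact hRpos.le
      · exact Real.exp_le_exp.mpr (hmax _)
    · exact hRpos.le
  set S := greedy r (k + 1) with hS
  have hSle : |S| ≤ R := abs_greedy_le r R hr0 hr1 _
  have hS2 : (S / 2) ^ 2 ≤ R ^ 2 := by nlinarith [abs_nonneg S, sq_abs S]
  set q := Real.sqrt (R ^ 2 - (S / 2) ^ 2) with hq
  have hq2 : q ^ 2 = R ^ 2 - (S / 2) ^ 2 := Real.sq_sqrt (by linarith)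
  set zi : ℂ := (↑(-(S / 2)) : ℂ) + (q : ℂ) * Complex.I with hzi
  set zj : ℂ := (↑(-(S / 2)) : ℂ) + ((-q : ℝ) : ℂ) * Complex.I with hzj
  have habszi : ‖zi‖ = R := by
    rw [hzi, Complex.norm_add_mul_I]
    rw [show (-(S / 2)) ^ 2 + q ^ 2 = R ^ 2 by rw [hq2]; ring]
    exact Real.sqrt_sq hRpos.le
  have habszj : ‖zj‖ = R := by
    rw [hzj, Complex.norm_add_mul_I]
    rw [show (-(S / 2)) ^ 2 + (-q) ^ 2 = R ^ 2 by rw [neg_sq, neg_sq, hq2]; ring]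
    exact Real.sqrt_sq hRpos.le
  have hzizj : zi + zj = -(S : ℂ) := by
    rw [hzi, hzj]; push_cast; ring
  -- the step at indices i and j vanishes
  have hri : r i.val = 0 := by
    have hh : (⟨i.val, i.isLt⟩ : Fin (k + 1)) = i := Fin.eta i i.isLt
    simp only [hrdef]
    rw [dif_pos i.isLt, hh]
    simp
  have hrj : r j.val = 0 := by
    have hh : (⟨j.val, j.isLt⟩ : Fin (k + 1)) = j := Fin.eta j j.isLt
    simp only [hrdef]
    rw [dif_pos j.isLt, hh]
    simp
  have hstepi : greedyStep r i.val = 0 := by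
    unfold greedyStep; split <;> simp [hri]
  have hstepj : greedyStep r j.val = 0 := by
    unfold greedyStep; split <;> simp [hrj]
  set z : Fin (k + 1) → ℂ := fun m =>
    (if m = i then zi else 0) + (if m = j then zj else 0) + ((greedyStep r m.val : ℝ) : ℂ)
    with hz
  have habs : ∀ m, ‖z m‖ = Real.exp (t m) := by
    intro m
    by_cases hmi : m = i
    · subst hmi
      simp only [hz, if_pos rfl, if_neg hij, hstepi]
      simpa using habszi
    · by_cases hmj : m = j
      · simp only [hz, if_neg hmi, if_pos hmj]
        rw [hmj, hstepj]
        have hje : Real.exp (t j) = R := by rw [hR, heq]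
        rw [hje]
        simpa using habszj
      · simp only [hz, if_neg hmi, if_neg hmj]
        rw [zero_add, zero_add, Complex.norm_real, Real.norm_eq_abs, abs_greedyStep r m.val (hr0 _)]
        have hm : (⟨m.val, m.isLt⟩ : Fin (k + 1)) = m := Fin.eta m m.isLt
        simp only [hrdef]
        rw [dif_pos m.isLt, hm, if_neg (by tauto)]
  have hsumstep : ∑ m : Fin (k + 1), ((greedyStep r m.val : ℝ) : ℂ) = (S : ℂ) := by
    rw [Fin.sum_univ_eq_sum_range (fun n => ((greedyStep r n : ℝ) : ℂ)) (k + 1)]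
    rw [← Complex.ofReal_sum]
    rw [sum_greedyStep]
  have hzsum : ∑ m, z m = 0 := by
    simp only [hz]
    rw [Finset.sum_add_distrib, Finset.sum_add_distrib, hsumstep]
    rw [Finset.sum_ite_eq' Finset.univ i (fun _ => zi),
        Finset.sum_ite_eq' Finset.univ j (fun _ => zj)]
    simp [hzizj]
  have habs0 : ‖z 0‖ = 1 := by
    rw [habs 0]
    have : t 0 = 0 := by rw [ht]; simp [termsWithZero]
    rw [this, Real.exp_zero]
  set w : Fin (k + 1) → ℂ := fun m => z m * (starRingEnd ℂ) (z 0) with hw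
  have hw0 : w 0 = 1 := by
    simp only [hw]
    rw [Complex.mul_conj, Complex.normSq_eq_norm_sq, habs0]
    norm_num
  have habsw : ∀ m, ‖w m‖ = Real.exp (t m) := by
    intro m
    simp only [hw]
    rw [norm_mul, Complex.norm_conj, habs0, habs m, mul_one]
  have hsumw : ∑ m, w m = 0 := by
    simp only [hw]
    rw [← Finset.sum_mul, hzsum, zero_mul]
  refine ⟨fun n => w n.succ, ?_, ?_, ?_⟩
  · intro n hn
    have hn' : w n.succ = 0 := hn
    have h1 := habsw n.succ
    rw [hn'] at h1
    simp at h1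
    exact absurd h1.symm (Real.exp_pos _).ne'
  · rw [← hsumw, Fin.sum_univ_succ, hw0]
  · intro n
    rw [habsw n.succ]
    have : t n.succ = x n := by rw [ht]; simp [termsWithZero]
    rw [this, Real.log_exp]
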